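/- The Rényi map has uniform decay of cylinders: sup over words w = (w_1,…,w_n) of integers ≥ 2 of diam(Δ_w) tends to 0 as n → ∞, where Δ_w = {x ∈ [0,1) : b_j(x) = w_j for 1 ≤ j ≤ n}. -/

import Mathlib

open Filter MeasureTheory Set

/-- The Rényi (backward continued fraction) map `f(x) = 1/(1−x) − ⌊1/(1−x)⌋`. -/
noncomputable def renyi (x : ℝ) : ℝ := 1 / (1 - x) - (⌊1 / (1 - x)⌋ : ℤ)

/-- The `j`-th backward continued fraction digit (`j ≥ 1`):
`b_j(x) = ⌊1/(1 − f^{j−1}(x))⌋ + 1`. -/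
noncomputable def bcf (j : ℕ) (x : ℝ) : ℤ := ⌊1 / (1 - renyi^[j - 1] x)⌋ + 1

/-- Birkhoff sum `S_n φ = Σ_{j=0}^{n-1} φ ∘ f^j` for the Rényi map. -/
noncomputable def birkR (φ : ℝ → ℝ) (n : ℕ) (x : ℝ) : ℝ :=
  ∑ j ∈ Finset.range n, φ (renyi^[j] x)

/-- The derivative of the `n`-th iterate of the Rényi map:
`(fⁿ)'(x) = ∏_{j=0}^{n−1} (1 − f^j(x))^{−2}`. -/
noncomputable def renyiDn (n : ℕ) (x : ℝ) : ℝ :=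
  ∏ j ∈ Finset.range n, ((1 - renyi^[j] x)⁻¹) ^ 2

/-- The cylinder `Δ_w = {x ∈ [0,1) : b_j(x) = w_j for 1 ≤ j ≤ n}` of a word
`w` of length `n` of integers. -/
def rcyl (n : ℕ) (w : Fin n → ℤ) : Set ℝ :=
  {x ∈ Set.Ico (0 : ℝ) 1 | ∀ i : Fin n, bcf ((i : ℕ) + 1) x = w i}

/-- `φ` belongs to the class `𝓕` for the Rényi map: there is a bound `D n` on
`S_nφ(x) − S_nφ(y)` over pairs `x, y` in a common `n`-cylinder (in particular
`D_1(φ) < ∞`), with `D n / n → 0` (i.e. `D_n(φ) = o(n)`). -/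
def MemFR (φ : ℝ → ℝ) : Prop :=
  ∃ D : ℕ → ℝ,
    (∀ n : ℕ, ∀ w : Fin n → ℤ, (∀ i, 2 ≤ w i) →
      ∀ x ∈ rcyl n w, ∀ y ∈ rcyl n w, birkR φ n x - birkR φ n y ≤ D n) ∧
    Tendsto (fun n : ℕ => D n / n) atTop (nhds 0)

/-- Transfer matrix (a, c, b, d) for the inverse branches. -/
def matA : ℕ → (ℕ → ℤ) → ℤ × ℤ × ℤ × ℤ
  | 0, _ => (1, 0, 0, 1)
  | (n+1), w =>
    let p := matA n (fun i => w (i+1))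
    (p.1 + (w 0 - 2) * p.2.2.1, p.2.1 + (w 0 - 2) * p.2.2.2,
     p.1 + (w 0 - 1) * p.2.2.1, p.2.1 + (w 0 - 1) * p.2.2.2)

lemma matA_props (n : ℕ) : ∀ (w : ℕ → ℤ), (∀ i < n, 2 ≤ w i) →
    0 ≤ (matA n w).1 ∧ 0 ≤ (matA n w).2.1 ∧ 0 ≤ (matA n w).2.2.1 ∧
    1 ≤ (matA n w).2.2.2 ∧ 1 ≤ (matA n w).1 + (matA n w).2.1 ∧
    (n : ℤ) + 1 ≤ (matA n w).2.2.1 + (matA n w).2.2.2 ∧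
    (matA n w).1 + (matA n w).2.1 ≤ (matA n w).2.2.1 + (matA n w).2.2.2 ∧
    (matA n w).1 * (matA n w).2.2.2 - (matA n w).2.2.1 * (matA n w).2.1 = 1 := by
  induction n with
  | zero => intro w _; simp [matA]
  | succ n ih =>
    intro w hw
    have hw' : ∀ i < n, 2 ≤ (fun i => w (i + 1)) i := fun i hi => hw (i+1) (by omega)
    obtain ⟨hA, hC, hB, hD, hAC, hBD, hle, hdet⟩ := ih (fun i => w (i+1)) hw'
    have h0 : 2 ≤ w 0 := hw 0 (by omega)
    simp only [matA]
    refine ⟨by nlinarith, by nlinarith, by nlinarith, by nlinarith, by nlinarith,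
      by push_cast; nlinarith, by nlinarith, by linear_combination hdet⟩

lemma renyi_mem (x : ℝ) : renyi x ∈ Set.Ico (0:ℝ) 1 := by
  have h : renyi x = Int.fract (1/(1-x)) := rfl
  rw [h]; exact ⟨Int.fract_nonneg _, Int.fract_lt_one _⟩

lemma renyi_moebius (n : ℕ) : ∀ (w : ℕ → ℤ) (x : ℝ), x ∈ Set.Ico (0:ℝ) 1 →
    (∀ i < n, bcf (i+1) x = w i) →
    renyi^[n] x ∈ Set.Ico (0:ℝ) 1 ∧
    x * (((matA n w).2.2.1 : ℝ) * renyi^[n] x + ((matA n w).2.2.2 : ℝ))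
      = ((matA n w).1 : ℝ) * renyi^[n] x + ((matA n w).2.1 : ℝ) := by
  induction n with
  | zero =>
    intro w x hx _
    refine ⟨hx, by simp [matA]⟩
  | succ n ih =>
    intro w x hx hb
    have hx1 : renyi x ∈ Set.Ico (0:ℝ) 1 := renyi_mem x
    have hb' : ∀ i < n, bcf (i+1) (renyi x) = (fun i => w (i+1)) i := by
      intro i hi
      have h := hb (i+1) (by omega)
      simp only [bcf, Nat.add_sub_cancel] at h ⊢
      rw [← Function.iterate_succ_apply]
      exact h
    obtain ⟨hmem, heq⟩ := ih (fun i => w (i+1)) (renyi x) hx1 hb'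
    have hfloor : (⌊1/(1-x)⌋ : ℤ) = w 0 - 1 := by
      have h := hb 0 (by omega)
      simp only [bcf, Function.iterate_zero_apply, Nat.sub_self] at h
      omega
    have h1x : (0:ℝ) < 1 - x := by linarith [hx.2]
    have hrx : renyi x = 1/(1-x) - ((w 0 : ℝ) - 1) := by
      rw [renyi, hfloor]; push_cast; ring
    have hkey : (1 - x) * (renyi x + (w 0 : ℝ) - 1) = 1 := by
      rw [hrx]; field_simp; ring
    rw [Function.iterate_succ_apply renyi n x]
    refine ⟨hmem, ?_⟩
    simp only [matA]
    push_cast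
    set u := renyi^[n] (renyi x) with hu
    set A := ((matA n fun i => w (i+1)).1 : ℝ)
    set C := ((matA n fun i => w (i+1)).2.1 : ℝ)
    set B := ((matA n fun i => w (i+1)).2.2.1 : ℝ)
    set D := ((matA n fun i => w (i+1)).2.2.2 : ℝ)
    linear_combination (1 - x) * heq - (B*u + D) * hkey

lemma cyl_dist (n : ℕ) (w : ℕ → ℤ) (hw : ∀ i < n, 2 ≤ w i)
    (x y : ℝ) (hx : x ∈ Set.Ico (0:ℝ) 1) (hy : y ∈ Set.Ico (0:ℝ) 1)
    (hbx : ∀ i < n, bcf (i+1) x = w i) (hby : ∀ i < n, bcf (i+1) y = w i) :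
    x - y ≤ 1 / (n + 1) := by
  obtain ⟨hux, heqx⟩ := renyi_moebius n w x hx hbx
  obtain ⟨huy, heqy⟩ := renyi_moebius n w y hy hby
  obtain ⟨hA, hC, hB, hD, hAC, hBD, hle, hdet⟩ := matA_props n w hw
  have hB0 : (0:ℝ) ≤ ((matA n w).2.2.1 : ℝ) := by exact_mod_cast hB
  have hD1 : (1:ℝ) ≤ ((matA n w).2.2.2 : ℝ) := by exact_mod_cast hD
  have hBD' : (n:ℝ) + 1 ≤ ((matA n w).2.2.1 : ℝ) + ((matA n w).2.2.2 : ℝ) := by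
    exact_mod_cast hBD
  have hdet' : ((matA n w).1 : ℝ) * ((matA n w).2.2.2 : ℝ)
      - ((matA n w).2.2.1 : ℝ) * ((matA n w).2.1 : ℝ) = 1 := by exact_mod_cast hdet
  set u := renyi^[n] x
  set v := renyi^[n] y
  set A := ((matA n w).1 : ℝ)
  set C := ((matA n w).2.1 : ℝ)
  set B := ((matA n w).2.2.1 : ℝ)
  set D := ((matA n w).2.2.2 : ℝ)
  have key : (x - y) * ((B*u + D) * (B*v + D)) = u - v := by
    linear_combination (B*v + D) * heqx - (B*u + D) * heqy + (u - v) * hdet'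
  have hP1 : (1:ℝ) ≤ B*u + D := by nlinarith [hux.1]
  have hQ1 : (1:ℝ) ≤ B*v + D := by nlinarith [huy.1]
  have hnum : ((n:ℝ)+1) * (u - v) ≤ (B*u + D) * (B*v + D) := by
    nlinarith [mul_nonneg (show (0:ℝ) ≤ (n:ℝ)+1 by positivity) huy.1,
      mul_nonneg (sub_nonneg.mpr hBD') hux.1,
      mul_nonneg (show (0:ℝ) ≤ D by linarith) (sub_nonneg.mpr hux.2.le),
      mul_nonneg (show (0:ℝ) ≤ B*u + D by linarith) (by linarith : (0:ℝ) ≤ B*v + D - 1)]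
  have hn : (0:ℝ) < (n:ℝ) + 1 := by positivity
  rw [le_div_iff₀ hn]
  have hPQ : (0:ℝ) < (B*u + D) * (B*v + D) := by nlinarith
  have h2 : (x - y) * ((n:ℝ)+1) * ((B*u + D) * (B*v + D)) ≤ 1 * ((B*u + D) * (B*v + D)) := by
    calc (x - y) * ((n:ℝ)+1) * ((B*u + D) * (B*v + D))
        = ((n:ℝ)+1) * ((x - y) * ((B*u + D) * (B*v + D))) := by ring
      _ = ((n:ℝ)+1) * (u - v) := by rw [key]
      _ ≤ (B*u + D) * (B*v + D) := hnum
      _ = 1 * ((B*u + D) * (B*v + D)) := by ring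
  exact le_of_mul_le_mul_right h2 hPQ

/-- **Uniform decay of cylinders for the Rényi map**: the supremum over words `w` of
length `n` (of integers `≥ 2`) of the diameter of the cylinder `Δ_w` tends to `0` as
`n → ∞`. -/
theorem renyi_uniform_decay_of_cylinders :
    ∀ ε : ℝ, 0 < ε → ∃ N : ℕ, ∀ n : ℕ, N ≤ n →
      ∀ w : Fin n → ℤ, (∀ i, 2 ≤ w i) → Metric.diam (rcyl n w) < ε := by
  intro ε hε
  obtain ⟨N, hN⟩ := exists_nat_gt (1/ε)
  refine ⟨N, fun n hn w hw => ?_⟩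
  have hdiam : Metric.diam (rcyl n w) ≤ 1/((n:ℝ)+1) := by
    apply Metric.diam_le_of_forall_dist_le (by positivity)
    intro x hx y hy
    set w' : ℕ → ℤ := fun i => if h : i < n then w ⟨i, h⟩ else 2 with hw'def
    have hw' : ∀ i < n, 2 ≤ w' i := by
      intro i hi; simp only [hw'def, dif_pos hi]; exact hw ⟨i, hi⟩
    have hbx : ∀ i < n, bcf (i+1) x = w' i := by
      intro i hi; simp only [hw'def, dif_pos hi]; exact hx.2 ⟨i, hi⟩
    have hby : ∀ i < n, bcf (i+1) y = w' i := by
      intro i hi; simp only [hw'def, dif_pos hi]; exact hy.2 ⟨i, hi⟩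
    rw [Real.dist_eq]
    exact abs_sub_le_iff.mpr
      ⟨cyl_dist n w' hw' x y hx.1 hy.1 hbx hby,
       cyl_dist n w' hw' y x hy.1 hx.1 hby hbx⟩
  have hNn : (N:ℝ) ≤ n := by exact_mod_cast hn
  have hfin : 1/((n:ℝ)+1) < ε := by
    rw [div_lt_iff₀ (by positivity)]
    rw [div_lt_iff₀ hε] at hN
    nlinarith
  linarith
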